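/- For n ≥ 2 and D, E ∈ ℂ, the residue at w = 0 of the function ψ(w) = (D + (D−E)/w)^n / (1 + w) equals D^n − E^n. -/

import Mathlib

open Complex Metric Finset intervalIntegral

lemma circleIntegral_finset_sum {ι : Type*} (s : Finset ι) (f : ι → ℂ → ℂ) (c : ℂ) (R : ℝ)
    (h : ∀ i ∈ s, CircleIntegrable (f i) c R) :
    (∮ z in C(c, R), ∑ i ∈ s, f i z) = ∑ i ∈ s, ∮ z in C(c, R), f i z := by
  simp only [circleIntegral, smul_sum]
  exact intervalIntegral.integral_finset_sum fun i hi => ((circleIntegrable_iff R).1 (h i hi))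

lemma one_add_ne_zero_of_mem {r : ℝ} (hr1 : r < 1) {z : ℂ} (hz : z ∈ closedBall (0:ℂ) r) :
    (1 : ℂ) + z ≠ 0 := by
  intro h
  have : ‖z‖ ≤ r := by simpa [Complex.dist_eq] using hz
  have hz1 : ‖z‖ = 1 := by
    have : z = -1 := by linear_combination h
    simp [this]
  linarith

lemma sphere_ne_zero_aux {r : ℝ} (hr0 : 0 < r) {z : ℂ} (hz : z ∈ sphere (0:ℂ) r) :
    z ≠ 0 := by
  intro h
  subst h
  rw [mem_sphere_iff_norm] at hz
  simp at hz
  linarith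

lemma zero_not_mem_sphere {r : ℝ} (hr0 : 0 < r) : (0 : ℂ) ∉ sphere (0:ℂ) |r| := by
  intro h
  rw [mem_sphere_iff_norm] at h
  simp at h
  rw [abs_of_pos hr0] at h
  linarith

lemma CircleIntegrable.const_mul' {f : ℂ → ℂ} {c : ℂ} {R : ℝ}
    (hf : CircleIntegrable f c R) (a : ℂ) : CircleIntegrable (fun z => a * f z) c R :=
  hf.const_mul a

lemma circleIntegrable_aux {r : ℝ} (hr0 : 0 < r) (hr1 : r < 1) (j : ℕ) :
    CircleIntegrable (fun z => 1 / z ^ j * (1 + z)⁻¹) 0 r := by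
  apply ContinuousOn.circleIntegrable hr0.le
  refine ContinuousOn.mul ?_ ?_
  · exact ContinuousOn.div continuousOn_const (continuous_pow j).continuousOn
      fun z hz => pow_ne_zero j (sphere_ne_zero_aux hr0 hz)
  · exact ContinuousOn.inv₀ (continuous_const.add continuous_id).continuousOn
      fun z hz => one_add_ne_zero_of_mem hr1 (sphere_subset_closedBall hz)

lemma key_integral {r : ℝ} (hr0 : 0 < r) (hr1 : r < 1) :
    ∀ j : ℕ, (∮ z in C(0, r), 1 / z ^ j * (1 + z)⁻¹)
      = if j = 0 then 0 else (-1 : ℂ) ^ (j - 1) * (2 * Real.pi * Complex.I) := by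
  have hzero : (∮ z in C(0, r), 1 / z ^ 0 * (1 + z)⁻¹) = 0 := by
    have h1 : (∮ z in C(0, r), 1 / z ^ 0 * (1 + z)⁻¹) = ∮ z in C(0, r), (1 + z)⁻¹ := by
      apply circleIntegral.integral_congr hr0.le
      intro z hz; simp
    rw [h1]
    apply Complex.circleIntegral_eq_zero_of_differentiable_on_off_countable hr0.le
      Set.countable_empty
    · exact ContinuousOn.inv₀ (continuous_const.add continuous_id).continuousOn
        fun w hw => one_add_ne_zero_of_mem hr1 hw
    · intro z hz
      have h2 : (1 : ℂ) + z ≠ 0 :=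
        one_add_ne_zero_of_mem hr1 (ball_subset_closedBall hz.1)
      exact ((differentiableAt_const _).add differentiableAt_id).inv h2
  intro j
  induction j with
  | zero => simpa using hzero
  | succ j ih =>
    have hsplit : (∮ z in C(0, r), 1 / z ^ (j+1) * (1 + z)⁻¹)
        = (∮ z in C(0, r), (z - 0) ^ (-(j+1:ℕ) : ℤ)) - ∮ z in C(0, r), 1 / z ^ j * (1 + z)⁻¹ := by
      rw [← circleIntegral.integral_sub]
      · apply circleIntegral.integral_congr hr0.le
        intro z hz
        have hz0 : z ≠ 0 := sphere_ne_zero_aux hr0 hz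
        have hz1 : (1 : ℂ) + z ≠ 0 :=
          one_add_ne_zero_of_mem hr1 (sphere_subset_closedBall hz)
        have hzp : z ^ (j+1) ≠ 0 := pow_ne_zero _ hz0
        simp only [sub_zero, zpow_neg, zpow_natCast]
        field_simp
        ring
      · exact circleIntegrable_sub_zpow_iff.2 (Or.inr (Or.inr (zero_not_mem_sphere hr0)))
      · exact circleIntegrable_aux hr0 hr1 j
    rcases Nat.eq_zero_or_pos j with rfl | hj
    · rw [hsplit, hzero]
      have h3 : (∮ z in C(0, r), (z - 0) ^ (-(0+1:ℕ) : ℤ)) = 2 * Real.pi * Complex.I := by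
        have h0 : (0 : ℂ) ∈ ball (0:ℂ) r := by simpa using hr0
        rw [← circleIntegral.integral_sub_inv_of_mem_ball h0]
        apply circleIntegral.integral_congr hr0.le
        intro z hz
        simp [zpow_neg]
      rw [h3]; simp
    · have hne : (-(j+1:ℕ) : ℤ) ≠ -1 := by omega
      rw [hsplit, circleIntegral.integral_sub_zpow_of_ne hne, ih, if_neg hj.ne',
        if_neg (Nat.succ_ne_zero j), zero_sub]
      have h2 : j - 1 + 1 = j := Nat.succ_pred_eq_of_pos hj
      rw [Nat.add_sub_cancel]
      conv_rhs => rw [← h2, pow_succ]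
      ring

theorem residue_formula_binomial (n : ℕ) (hn : 2 ≤ n) (D E : ℂ)
    (r : ℝ) (hr0 : 0 < r) (hr1 : r < 1) :
    (∮ z in C(0, r), (D + (D - E) / z) ^ n / (1 + z))
      = 2 * Real.pi * Complex.I * (D ^ n - E ^ n) := by
  have hcongr : (∮ z in C(0, r), (D + (D - E) / z) ^ n / (1 + z))
      = ∮ z in C(0, r), ∑ j ∈ range (n+1),
          (n.choose j : ℂ) * D ^ (n - j) * (D - E) ^ j * (1 / z ^ j * (1 + z)⁻¹) := by
    apply circleIntegral.integral_congr hr0.le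
    intro z hz
    have hz0 : z ≠ 0 := sphere_ne_zero_aux hr0 hz
    have hz1 : (1 : ℂ) + z ≠ 0 :=
      one_add_ne_zero_of_mem hr1 (sphere_subset_closedBall hz)
    show (D + (D - E) / z) ^ n / (1 + z)
      = ∑ j ∈ range (n+1), (n.choose j : ℂ) * D ^ (n - j) * (D - E) ^ j * (1 / z ^ j * (1 + z)⁻¹)
    rw [add_comm D ((D - E) / z), add_pow, Finset.sum_div]
    apply Finset.sum_congr rfl
    intro j hj
    have hzp : z ^ j ≠ 0 := pow_ne_zero _ hz0
    rw [div_pow, one_div]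
    ring
  have hint : ∀ j ∈ range (n+1), CircleIntegrable
      (fun z => (n.choose j : ℂ) * D ^ (n - j) * (D - E) ^ j * (1 / z ^ j * (1 + z)⁻¹)) 0 r :=
    fun j _ => CircleIntegrable.const_mul' (circleIntegrable_aux hr0 hr1 j) _
  rw [hcongr, circleIntegral_finset_sum _ _ _ _ hint]
  have hterm : ∀ j ∈ range (n+1),
      (∮ z in C(0, r), (n.choose j : ℂ) * D ^ (n - j) * (D - E) ^ j * (1 / z ^ j * (1 + z)⁻¹))
      = (n.choose j : ℂ) * D ^ (n - j) * (D - E) ^ j *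
        (if j = 0 then 0 else (-1 : ℂ) ^ (j - 1) * (2 * Real.pi * Complex.I)) := by
    intro j _
    rw [circleIntegral.integral_const_mul, key_integral hr0 hr1 j]
  rw [Finset.sum_congr rfl hterm]
  rw [Finset.sum_range_succ']
  simp only [if_neg (Nat.succ_ne_zero _), reduceIte, mul_zero, add_zero, Nat.add_sub_cancel]
  have hEpow : ∑ j ∈ range (n+1), (E - D) ^ j * D ^ (n - j) * (n.choose j : ℂ) = E ^ n := by
    rw [← add_pow]; ring_nf
  rw [Finset.sum_range_succ'] at hEpow
  simp only [pow_zero, one_mul, Nat.choose_zero_right, Nat.cast_one, mul_one,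
    Nat.sub_zero] at hEpow
  have hmain : ∑ i ∈ range n, (n.choose (i+1) : ℂ) * D ^ (n - (i+1)) * (D - E) ^ (i+1) *
      ((-1 : ℂ) ^ i * (2 * Real.pi * Complex.I))
      = -(2 * Real.pi * Complex.I) * ∑ i ∈ range n, (E - D) ^ (i+1) * D ^ (n - (i+1)) *
        (n.choose (i+1) : ℂ) := by
    rw [Finset.mul_sum]
    apply Finset.sum_congr rfl
    intro i _
    have hmo : (D - E) ^ (i+1) * (-1 : ℂ) ^ i = -(E - D) ^ (i+1) := by
      rw [show D - E = (-1) * (E - D) by ring, mul_pow, mul_comm ((-1:ℂ)^(i+1)) _,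
        mul_assoc, ← pow_add]
      have hodd : ((-1:ℂ)) ^ (i + 1 + i) = -1 := Odd.neg_one_pow ⟨i, by ring⟩
      rw [hodd]; ring
    calc (n.choose (i+1) : ℂ) * D ^ (n - (i+1)) * (D - E) ^ (i+1) *
          ((-1 : ℂ) ^ i * (2 * Real.pi * Complex.I))
        = ((D - E) ^ (i+1) * (-1 : ℂ) ^ i) * (n.choose (i+1) : ℂ) * D ^ (n - (i+1)) *
          (2 * Real.pi * Complex.I) := by ring
      _ = _ := by rw [hmo]; ring
  rw [hmain]
  have hsum : ∑ i ∈ range n, (E - D) ^ (i+1) * D ^ (n - (i+1)) * (n.choose (i+1) : ℂ)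
      = E ^ n - D ^ n := by linear_combination hEpow
  rw [hsum]
  ring
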